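/- For all natural numbers ℓ, k with k ≤ ℓ and all natural numbers α, β with α < 2^ℓ and β < 2^ℓ, there exists bit ∈ {0,1} such that, as an equality of integers, ⌊((α+β) mod 2^ℓ)/2^k⌋ = ⌊α/2^k⌋ + ⌊β/2^k⌋ − LT((α+β) mod 2^ℓ, α)·2^{ℓ−k} + bit. -/

import Mathlib

/-- cut of a modular sum decomposes into cuts plus a wrap term and a carry bit. -/
theorem stmt_0 (ℓ k : ℕ) (hk : k ≤ ℓ) (α β : ℕ) (hα : α < 2 ^ ℓ) (hβ : β < 2 ^ ℓ) :
    ∃ bit : ℕ, bit ≤ 1 ∧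
      (((α + β) % 2 ^ ℓ / 2 ^ k : ℕ) : ℤ) =
        ((α / 2 ^ k : ℕ) : ℤ) + ((β / 2 ^ k : ℕ) : ℤ)
          - (if (α + β) % 2 ^ ℓ < α then (1 : ℤ) else 0) * 2 ^ (ℓ - k) + (bit : ℤ) := by
  have hpk : 0 < 2 ^ k := Nat.pow_pos (by norm_num)
  obtain ⟨c, hc1, hdiv⟩ : ∃ c, c ≤ 1 ∧
      (α + β) / 2 ^ k = α / 2 ^ k + β / 2 ^ k + c := by
    refine ⟨if 2 ^ k ≤ α % 2 ^ k + β % 2 ^ k then 1 else 0, by split <;> simp,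
      Nat.add_div hpk⟩
  refine ⟨c, hc1, ?_⟩
  have hcast : ((2 : ℤ) ^ (ℓ - k)) = ((2 ^ (ℓ - k) : ℕ) : ℤ) := by push_cast; ring
  by_cases h : α + β < 2 ^ ℓ
  · rw [Nat.mod_eq_of_lt h, if_neg (by omega), hdiv]
    push_cast; ring
  · have hlt : (α + β) % 2 ^ ℓ = α + β - 2 ^ ℓ := by
      rw [Nat.mod_eq_sub_mod (by omega), Nat.mod_eq_of_lt (by omega)]
    have hs : α + β - 2 ^ ℓ < α := by omega
    rw [hlt, if_pos hs, one_mul, hcast]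
    have hsum : (α + β - 2 ^ ℓ) + 2 ^ k * 2 ^ (ℓ - k) = α + β := by
      rw [← pow_add]
      have : k + (ℓ - k) = ℓ := by omega
      rw [this]; omega
    have h2 : ((α + β - 2 ^ ℓ) + 2 ^ k * 2 ^ (ℓ - k)) / 2 ^ k =
        (α + β - 2 ^ ℓ) / 2 ^ k + 2 ^ (ℓ - k) := Nat.add_mul_div_left _ _ hpk
    rw [hsum, hdiv] at h2
    omega
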